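/- Let n ≥ 2 and r ≥ 1. Let A_i : [0,1] → M_r(ℂ) (1 ≤ i ≤ n) and B_{ij} : [0,1] → M_r(ℂ) (1 ≤ i < j ≤ n) be continuous, with each A_i(t) Hermitian. Suppose that for every t ∈ [0,1] the matrix M(t) := ∑_{1 ≤ i < j ≤ n} (A_i(t)A_j(t) + A_j(t)A_i(t) − B_{ij}(t)B_{ij}(t)* − B_{ij}(t)*B_{ij}(t)) is positive definite, and that for every index k ∈ {1,…,n} the matrix ∑_{i≠k} A_i(0) is positive definite. Then for every t ∈ [0,1] and every k, the matrix ∑_{i≠k} A_i(t) is positive definite. -/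

import Mathlib

set_option maxHeartbeats 1000000
open Matrix ComplexOrder

lemma aux_sum_mulVec {ι : Type*} {r : ℕ} (s : Finset ι) (M : ι → Matrix (Fin r) (Fin r) ℂ)
    (v : Fin r → ℂ) : (∑ i ∈ s, M i) *ᵥ v = ∑ i ∈ s, M i *ᵥ v := by
  ext j
  simp only [Matrix.mulVec, dotProduct, Matrix.sum_apply, Finset.sum_apply, Finset.sum_mul]
  rw [Finset.sum_comm]

lemma aux_dotProduct_sum {ι : Type*} {r : ℕ} (s : Finset ι) (u : Fin r → ℂ) (w : ι → Fin r → ℂ) :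
    u ⬝ᵥ (∑ i ∈ s, w i) = ∑ i ∈ s, u ⬝ᵥ w i := by
  simp only [dotProduct, Finset.sum_apply, Finset.mul_sum]
  rw [Finset.sum_comm]

lemma aux_sum_dotProduct {ι : Type*} {r : ℕ} (s : Finset ι) (w : ι → Fin r → ℂ) (u : Fin r → ℂ) :
    (∑ i ∈ s, w i) ⬝ᵥ u = ∑ i ∈ s, w i ⬝ᵥ u := by
  simp only [dotProduct, Finset.sum_apply, Finset.sum_mul]
  rw [Finset.sum_comm]

lemma aux_quad_mul {r : ℕ} (M N : Matrix (Fin r) (Fin r) ℂ) (v : Fin r → ℂ) :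
    star v ⬝ᵥ (M * N) *ᵥ v = star (Mᴴ *ᵥ v) ⬝ᵥ (N *ᵥ v) := by
  rw [← mulVec_mulVec, dotProduct_mulVec, star_mulVec, conjTranspose_conjTranspose]

lemma aux_pair_sum {n : ℕ} (c : Fin n → Fin n → ℂ) :
    ∑ p ∈ Finset.univ.filter (fun p : Fin n × Fin n => p.1 < p.2), (c p.1 p.2 + c p.2 p.1)
      = (∑ p : Fin n × Fin n, c p.1 p.2) - ∑ i, c i i := by
  classical
  have h1 := Finset.sum_filter_add_sum_filter_not (Finset.univ : Finset (Fin n × Fin n))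
    (fun p => p.1 < p.2) (fun p => c p.1 p.2)
  have h2 := Finset.sum_filter_add_sum_filter_not
    (Finset.univ.filter (fun p : Fin n × Fin n => ¬ p.1 < p.2))
    (fun p => p.2 < p.1) (fun p => c p.1 p.2)
  rw [Finset.filter_filter, Finset.filter_filter] at h2
  have e1 : (Finset.univ.filter (fun p : Fin n × Fin n => ¬ p.1 < p.2 ∧ p.2 < p.1))
      = Finset.univ.filter (fun p : Fin n × Fin n => p.2 < p.1) := by
    apply Finset.filter_congr
    intro p _
    exact ⟨And.right, fun h => ⟨asymm h, h⟩⟩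
  have e2 : (Finset.univ.filter (fun p : Fin n × Fin n => ¬ p.1 < p.2 ∧ ¬ p.2 < p.1))
      = (Finset.univ : Finset (Fin n)).diag := by
    ext p
    simp only [Finset.mem_filter, Finset.mem_univ, true_and, Finset.mem_diag]
    constructor
    · rintro ⟨ha, hb⟩
      exact le_antisymm (not_lt.1 hb) (not_lt.1 ha)
    · intro h
      rw [h]
      exact ⟨lt_irrefl _, lt_irrefl _⟩
  have e3 : ∑ p ∈ Finset.univ.filter (fun p : Fin n × Fin n => p.2 < p.1), c p.1 p.2
      = ∑ p ∈ Finset.univ.filter (fun p : Fin n × Fin n => p.1 < p.2), c p.2 p.1 := by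
    apply Finset.sum_equiv (Equiv.prodComm (Fin n) (Fin n)) <;> simp
  rw [e1, e2, Finset.sum_diag, e3] at h2
  rw [Finset.sum_add_distrib]
  linear_combination h1 + h2

lemma aux_key {n r : ℕ} {A : Fin n → Matrix (Fin r) (Fin r) ℂ}
    {B : Fin n → Fin n → Matrix (Fin r) (Fin r) ℂ}
    (hAherm : ∀ i, (A i).IsHermitian)
    (hM : (∑ ij ∈ Finset.univ.filter (fun ij : Fin n × Fin n => ij.1 < ij.2),
        (A ij.1 * A ij.2 + A ij.2 * A ij.1 - B ij.1 ij.2 * (B ij.1 ij.2)ᴴ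
          - (B ij.1 ij.2)ᴴ * B ij.1 ij.2)).PosDef)
    {k : Fin n} (hS : (∑ i ∈ Finset.univ.erase k, A i).PosSemidef) :
    (∑ i ∈ Finset.univ.erase k, A i).PosDef := by
  classical
  refine .of_dotProduct_mulVec_pos hS.1 fun v hv => ?_
  rcases (hS.dotProduct_mulVec_nonneg v).lt_or_eq with h | h
  · exact h
  exfalso
  have hSv : (∑ i ∈ Finset.univ.erase k, A i) *ᵥ v = 0 :=
    (hS.dotProduct_mulVec_zero_iff v).mp h.symm
  set w : Fin n → Fin r → ℂ := fun i => A i *ᵥ v with hw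
  have hws : ∑ i ∈ Finset.univ.erase k, w i = 0 := by
    rw [← aux_sum_mulVec]; exact hSv
  have hsumw : ∑ i : Fin n, w i = w k := by
    rw [← Finset.add_sum_erase _ _ (Finset.mem_univ k), hws, add_zero]
  set c : Fin n → Fin n → ℂ := fun i j => star (w i) ⬝ᵥ w j with hc
  have hcd : ∀ i, 0 ≤ c i i := fun i => dotProduct_star_self_nonneg _
  have hQ := hM.dotProduct_mulVec_pos hv
  have e1 : ∀ i j, star v ⬝ᵥ (A i * A j) *ᵥ v = c i j := by
    intro i j
    rw [aux_quad_mul, (hAherm i).eq]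
  have hexp : star v ⬝ᵥ (∑ ij ∈ Finset.univ.filter (fun ij : Fin n × Fin n => ij.1 < ij.2),
        (A ij.1 * A ij.2 + A ij.2 * A ij.1 - B ij.1 ij.2 * (B ij.1 ij.2)ᴴ
          - (B ij.1 ij.2)ᴴ * B ij.1 ij.2)) *ᵥ v
      = ∑ ij ∈ Finset.univ.filter (fun ij : Fin n × Fin n => ij.1 < ij.2),
        (c ij.1 ij.2 + c ij.2 ij.1
          - star ((B ij.1 ij.2)ᴴ *ᵥ v) ⬝ᵥ ((B ij.1 ij.2)ᴴ *ᵥ v)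
          - star (B ij.1 ij.2 *ᵥ v) ⬝ᵥ (B ij.1 ij.2 *ᵥ v)) := by
    rw [show (∑ ij ∈ Finset.univ.filter (fun ij : Fin n × Fin n => ij.1 < ij.2),
        (A ij.1 * A ij.2 + A ij.2 * A ij.1 - B ij.1 ij.2 * (B ij.1 ij.2)ᴴ
          - (B ij.1 ij.2)ᴴ * B ij.1 ij.2)) *ᵥ v
      = ∑ ij ∈ Finset.univ.filter (fun ij : Fin n × Fin n => ij.1 < ij.2),
        ((A ij.1 * A ij.2 + A ij.2 * A ij.1 - B ij.1 ij.2 * (B ij.1 ij.2)ᴴ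
          - (B ij.1 ij.2)ᴴ * B ij.1 ij.2) *ᵥ v) from aux_sum_mulVec _ _ v]
    rw [show (star v ⬝ᵥ ∑ ij ∈ Finset.univ.filter (fun ij : Fin n × Fin n => ij.1 < ij.2),
        ((A ij.1 * A ij.2 + A ij.2 * A ij.1 - B ij.1 ij.2 * (B ij.1 ij.2)ᴴ
          - (B ij.1 ij.2)ᴴ * B ij.1 ij.2) *ᵥ v))
      = ∑ ij ∈ Finset.univ.filter (fun ij : Fin n × Fin n => ij.1 < ij.2),
        (star v ⬝ᵥ ((A ij.1 * A ij.2 + A ij.2 * A ij.1 - B ij.1 ij.2 * (B ij.1 ij.2)ᴴ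
          - (B ij.1 ij.2)ᴴ * B ij.1 ij.2) *ᵥ v)) from aux_dotProduct_sum _ _ _]
    refine Finset.sum_congr rfl fun p _ => ?_
    rw [sub_mulVec, sub_mulVec, add_mulVec, dotProduct_sub, dotProduct_sub, dotProduct_add,
      e1, e1, aux_quad_mul, aux_quad_mul, conjTranspose_conjTranspose]
  rw [hexp] at hQ
  have hle : ∑ ij ∈ Finset.univ.filter (fun ij : Fin n × Fin n => ij.1 < ij.2),
        (c ij.1 ij.2 + c ij.2 ij.1
          - star ((B ij.1 ij.2)ᴴ *ᵥ v) ⬝ᵥ ((B ij.1 ij.2)ᴴ *ᵥ v)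
          - star (B ij.1 ij.2 *ᵥ v) ⬝ᵥ (B ij.1 ij.2 *ᵥ v))
      ≤ ∑ ij ∈ Finset.univ.filter (fun ij : Fin n × Fin n => ij.1 < ij.2),
        (c ij.1 ij.2 + c ij.2 ij.1) := by
    refine Finset.sum_le_sum fun p _ => ?_
    have n1 := dotProduct_star_self_nonneg ((B p.1 p.2)ᴴ *ᵥ v)
    have n2 := dotProduct_star_self_nonneg (B p.1 p.2 *ᵥ v)
    calc c p.1 p.2 + c p.2 p.1 - star ((B p.1 p.2)ᴴ *ᵥ v) ⬝ᵥ ((B p.1 p.2)ᴴ *ᵥ v)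
          - star (B p.1 p.2 *ᵥ v) ⬝ᵥ (B p.1 p.2 *ᵥ v)
        ≤ c p.1 p.2 + c p.2 p.1 - star ((B p.1 p.2)ᴴ *ᵥ v) ⬝ᵥ ((B p.1 p.2)ᴴ *ᵥ v) :=
          sub_le_self _ n2
      _ ≤ c p.1 p.2 + c p.2 p.1 := sub_le_self _ n1
  have htot : (∑ p : Fin n × Fin n, c p.1 p.2) = c k k := by
    rw [Fintype.sum_prod_type]
    have : ∀ i, ∑ j, c i j = c i k := by
      intro i
      rw [show (∑ j, c i j) = star (w i) ⬝ᵥ ∑ j, w j from (aux_dotProduct_sum _ _ _).symm, hsumw]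
    simp_rw [this]
    have : ∑ i, c i k = star (∑ i, w i) ⬝ᵥ w k := by
      rw [star_sum]
      exact (aux_sum_dotProduct _ _ _).symm
    rw [this, hsumw]
  have hT : ∑ ij ∈ Finset.univ.filter (fun ij : Fin n × Fin n => ij.1 < ij.2),
      (c ij.1 ij.2 + c ij.2 ij.1) = - ∑ i ∈ Finset.univ.erase k, c i i := by
    rw [aux_pair_sum, htot, ← Finset.add_sum_erase _ (fun i => c i i) (Finset.mem_univ k)]
    ring
  have hT0 : ∑ ij ∈ Finset.univ.filter (fun ij : Fin n × Fin n => ij.1 < ij.2),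
      (c ij.1 ij.2 + c ij.2 ij.1) ≤ 0 := by
    rw [hT, neg_nonpos]
    exact Finset.sum_nonneg fun i _ => hcd i
  exact absurd (hQ.trans_le (hle.trans hT0)) (lt_irrefl 0)

lemma aux_herm_sum {n r : ℕ} {s : Finset (Fin n)} {A : Fin n → Matrix (Fin r) (Fin r) ℂ}
    (h : ∀ i, (A i).IsHermitian) : (∑ i ∈ s, A i).IsHermitian := by
  unfold Matrix.IsHermitian
  rw [Matrix.conjTranspose_sum]
  exact Finset.sum_congr rfl fun i _ => h i

lemma aux_im_zero {r : ℕ} {H : Matrix (Fin r) (Fin r) ℂ} (hH : H.IsHermitian) (v : Fin r → ℂ) :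
    (star v ⬝ᵥ H *ᵥ v).im = 0 := by
  have h : star (star v ⬝ᵥ H *ᵥ v) = star v ⬝ᵥ H *ᵥ v := by
    conv_lhs => rw [star_dotProduct]
    rw [star_star, star_mulVec, ← dotProduct_mulVec, hH.eq]
  have h2 := congrArg Complex.im h
  rw [Complex.star_def, Complex.conj_im] at h2
  linarith

lemma aux_scale {r : ℕ} (S : Matrix (Fin r) (Fin r) ℂ) (v : Fin r → ℂ) (a : ℝ) :
    star (a • v) ⬝ᵥ S *ᵥ (a • v) = ((a * a : ℝ) : ℂ) * (star v ⬝ᵥ S *ᵥ v) := by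
  rw [star_smul, star_trivial, Matrix.mulVec_smul, smul_dotProduct,
    dotProduct_smul, smul_smul, Complex.real_smul, Complex.ofReal_mul]

lemma aux_entry_bound {r : ℕ} (E : Matrix (Fin r) (Fin r) ℂ) (v : Fin r → ℂ) {ε : ℝ}
    (hE : ∀ i j, ‖E i j‖ ≤ ε) (hε : 0 ≤ ε) :
    ‖star v ⬝ᵥ E *ᵥ v‖ ≤ ε * ((r : ℝ) * ‖v‖) ^ 2 := by
  have hb : ∀ i, ‖(E *ᵥ v) i‖ ≤ (r : ℝ) * (ε * ‖v‖) := by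
    intro i
    have : (E *ᵥ v) i = ∑ j, E i j * v j := rfl
    rw [this]
    calc ‖∑ j, E i j * v j‖ ≤ ∑ j, ‖E i j * v j‖ := norm_sum_le _ _
      _ ≤ ∑ _j : Fin r, ε * ‖v‖ := Finset.sum_le_sum fun j _ => by
          rw [norm_mul]
          exact mul_le_mul (hE i j) (norm_le_pi_norm v j) (norm_nonneg _) hε
      _ = (r : ℝ) * (ε * ‖v‖) := by
          simp [Finset.sum_const, Finset.card_univ, nsmul_eq_mul]
  have h0 : star v ⬝ᵥ E *ᵥ v = ∑ i, (star v) i * (E *ᵥ v) i := rfl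
  rw [h0]
  calc ‖∑ i, (star v) i * (E *ᵥ v) i‖ ≤ ∑ i, ‖(star v) i * (E *ᵥ v) i‖ := norm_sum_le _ _
    _ ≤ ∑ _i : Fin r, ‖v‖ * ((r : ℝ) * (ε * ‖v‖)) := by
        refine Finset.sum_le_sum fun i _ => ?_
        rw [norm_mul]
        refine mul_le_mul ?_ (hb i) (norm_nonneg _) (norm_nonneg _)
        rw [Pi.star_apply, norm_star]
        exact norm_le_pi_norm v i
    _ = (r : ℝ) * (‖v‖ * ((r : ℝ) * (ε * ‖v‖))) := by
        simp [Finset.sum_const, Finset.card_univ, nsmul_eq_mul]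
    _ = ε * ((r : ℝ) * ‖v‖) ^ 2 := by ring

lemma aux_lower {r : ℕ} (hr : 1 ≤ r) {S : Matrix (Fin r) (Fin r) ℂ} (hS : S.PosDef) :
    ∃ c > 0, ∀ v : Fin r → ℂ, c * ‖v‖ ^ 2 ≤ (star v ⬝ᵥ S *ᵥ v).re := by
  haveI : Nonempty (Fin r) := ⟨⟨0, hr⟩⟩
  have hcont : Continuous fun v : Fin r → ℂ => (star v ⬝ᵥ S *ᵥ v).re :=
    Complex.continuous_re.comp
      (continuous_star.dotProduct (continuous_const.matrix_mulVec continuous_id))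
  obtain ⟨v₀, hv₀s, hmin⟩ := (isCompact_sphere (0 : Fin r → ℂ) 1).exists_isMinOn
    ⟨(fun _ => 1), by
      rw [mem_sphere_zero_iff_norm, pi_norm_const]
      simp⟩ hcont.continuousOn
  have hv₀n : ‖v₀‖ = 1 := mem_sphere_zero_iff_norm.mp hv₀s
  have hv₀ : v₀ ≠ 0 := by
    intro h
    rw [h, norm_zero] at hv₀n
    norm_num at hv₀n
  set c : ℝ := (star v₀ ⬝ᵥ S *ᵥ v₀).re with hcdef
  have hc : 0 < c := by
    have := hS.dotProduct_mulVec_pos hv₀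
    have h1 := (Complex.lt_def.mp this).1
    simpa using h1
  refine ⟨c, hc, fun v => ?_⟩
  rcases eq_or_ne v 0 with rfl | hv
  · simp
  · have hvn : ‖v‖ ≠ 0 := norm_ne_zero_iff.mpr hv
    set u : Fin r → ℂ := (‖v‖⁻¹ : ℝ) • v with hu
    have hun : ‖u‖ = 1 := by
      rw [hu, norm_smul, Real.norm_eq_abs, abs_of_nonneg (inv_nonneg.mpr (norm_nonneg v)),
        inv_mul_cancel₀ hvn]
    have hv_eq : v = (‖v‖ : ℝ) • u := by
      rw [hu, smul_smul, mul_inv_cancel₀ hvn, one_smul]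
    have hre : (star v ⬝ᵥ S *ᵥ v).re = ‖v‖ ^ 2 * (star u ⬝ᵥ S *ᵥ u).re := by
      conv_lhs => rw [hv_eq]
      rw [aux_scale, Complex.re_ofReal_mul]
      ring
    have hge : c ≤ (star u ⬝ᵥ S *ᵥ u).re :=
      (isMinOn_iff.mp hmin) u (mem_sphere_zero_iff_norm.mpr hun)
    rw [hre]
    have h2 : (0 : ℝ) ≤ ‖v‖ ^ 2 := sq_nonneg _
    nlinarith

theorem stmt10 (n r : ℕ) (hn : 2 ≤ n) (hr : 1 ≤ r)
    (A : Fin n → ℝ → Matrix (Fin r) (Fin r) ℂ)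
    (B : Fin n → Fin n → ℝ → Matrix (Fin r) (Fin r) ℂ)
    (hAcont : ∀ i, ContinuousOn (A i) (Set.Icc (0 : ℝ) 1))
    (hBcont : ∀ i j, ContinuousOn (B i j) (Set.Icc (0 : ℝ) 1))
    (hAherm : ∀ i, ∀ t ∈ Set.Icc (0 : ℝ) 1, (A i t).IsHermitian)
    (hpos : ∀ t ∈ Set.Icc (0 : ℝ) 1,
      (∑ ij ∈ Finset.univ.filter (fun ij : Fin n × Fin n => ij.1 < ij.2),
        (A ij.1 t * A ij.2 t + A ij.2 t * A ij.1 t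
          - B ij.1 ij.2 t * (B ij.1 ij.2 t)ᴴ - (B ij.1 ij.2 t)ᴴ * B ij.1 ij.2 t)).PosDef)
    (h0 : ∀ k : Fin n, (∑ i ∈ Finset.univ.erase k, A i 0).PosDef) :
    ∀ t ∈ Set.Icc (0 : ℝ) 1, ∀ k : Fin n,
      (∑ i ∈ Finset.univ.erase k, A i t).PosDef := by
  haveI hPC : PreconnectedSpace (Set.Icc (0 : ℝ) 1) :=
    Subtype.preconnectedSpace isPreconnected_Icc
  have hgc : ∀ k : Fin n,
      Continuous fun x : Set.Icc (0 : ℝ) 1 => ∑ i ∈ Finset.univ.erase k, A i ↑x := by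
    intro k
    exact continuous_finset_sum _ fun i _ => (hAcont i).restrict
  have hherm : ∀ (x : Set.Icc (0 : ℝ) 1) (k : Fin n),
      (∑ i ∈ Finset.univ.erase k, A i ↑x).IsHermitian := fun x k =>
    aux_herm_sum fun i => hAherm i ↑x x.2
  set U : Set (Set.Icc (0 : ℝ) 1) :=
    {x | ∀ k : Fin n, (∑ i ∈ Finset.univ.erase k, A i ↑x).PosDef} with hUdef
  have hUopen : IsOpen U := by
    have hU2 : U = ⋂ k : Fin n,
        {x : Set.Icc (0 : ℝ) 1 | (∑ i ∈ Finset.univ.erase k, A i ↑x).PosDef} := by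
      ext x
      simp [hUdef, Set.mem_iInter]
    rw [hU2]
    refine isOpen_iInter_of_finite fun k => ?_
    rw [isOpen_iff_forall_mem_open]
    rintro x₀ hx₀
    have hS₀pd : (∑ i ∈ Finset.univ.erase k, A i ↑x₀).PosDef := hx₀
    obtain ⟨c, hc, hlow⟩ := aux_lower hr hS₀pd
    set S₀ := ∑ i ∈ Finset.univ.erase k, A i ↑x₀ with hS₀
    set ε : ℝ := c / ((r : ℝ) ^ 2 + 1) with hεdef
    have hεpos : 0 < ε := div_pos hc (by positivity)
    have hεlt : ε * (r : ℝ) ^ 2 < c := by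
      have h1 : ε * ((r : ℝ) ^ 2 + 1) = c := div_mul_cancel₀ c (by positivity)
      nlinarith
    refine ⟨(fun x : Set.Icc (0 : ℝ) 1 => ∑ i ∈ Finset.univ.erase k, A i ↑x) ⁻¹'
      {M | ∀ p : Fin r × Fin r, ‖M p.1 p.2 - S₀ p.1 p.2‖ < ε}, ?_, ?_, ?_⟩
    · rintro x hx
      simp only [Set.mem_preimage, Set.mem_setOf_eq] at hx ⊢
      set T := ∑ i ∈ Finset.univ.erase k, A i ↑x with hT
      refine .of_dotProduct_mulVec_pos (hherm x k) fun v hv => ?_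
      rw [Complex.lt_def]
      refine ⟨?_, by rw [Complex.zero_im]; exact (aux_im_zero (hherm x k) v).symm⟩
      simp only [Complex.zero_re]
      have hdecomp : star v ⬝ᵥ T *ᵥ v = star v ⬝ᵥ S₀ *ᵥ v + star v ⬝ᵥ (T - S₀) *ᵥ v := by
        rw [sub_mulVec, dotProduct_sub]
        ring
      have hEb := aux_entry_bound (T - S₀) v
        (fun i j => le_of_lt (by simpa [Matrix.sub_apply] using hx (i, j))) hεpos.le
      have h1 : |(star v ⬝ᵥ (T - S₀) *ᵥ v).re| ≤ ε * ((r : ℝ) * ‖v‖) ^ 2 := by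
        refine le_trans ?_ hEb
        exact Complex.abs_re_le_norm _
      have h2 := hlow v
      have hvpos : 0 < ‖v‖ := norm_pos_iff.mpr hv
      rw [hdecomp, Complex.add_re]
      have h3 := neg_abs_le ((star v ⬝ᵥ (T - S₀) *ᵥ v).re)
      nlinarith [mul_pos hvpos hvpos]
    · refine IsOpen.preimage (hgc k) ?_
      have : {M : Matrix (Fin r) (Fin r) ℂ | ∀ p : Fin r × Fin r, ‖M p.1 p.2 - S₀ p.1 p.2‖ < ε}
          = ⋂ p : Fin r × Fin r, {M : Matrix (Fin r) (Fin r) ℂ | ‖M p.1 p.2 - S₀ p.1 p.2‖ < ε} := by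
        ext M
        simp [Set.mem_iInter]
      rw [this]
      refine isOpen_iInter_of_finite fun p => ?_
      exact isOpen_lt (continuous_norm.comp
        ((continuous_id.matrix_elem p.1 p.2).sub continuous_const)) continuous_const
    · simp only [Set.mem_preimage, Set.mem_setOf_eq, ← hS₀]
      intro p
      simpa using hεpos
  have hUclosed : IsClosed U := by
    have hUV : U = {x : Set.Icc (0 : ℝ) 1 | ∀ (k : Fin n) (v : Fin r → ℂ),
        0 ≤ (star v ⬝ᵥ (∑ i ∈ Finset.univ.erase k, A i ↑x) *ᵥ v).re} := by
      ext x
      simp only [hUdef, Set.mem_setOf_eq]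
      constructor
      · intro h k v
        have h1 := (h k).posSemidef.dotProduct_mulVec_nonneg v
        simpa only [Complex.zero_re] using (Complex.le_def.mp h1).1
      · intro h k
        have hpsd : (∑ i ∈ Finset.univ.erase k, A i ↑x).PosSemidef := by
          refine .of_dotProduct_mulVec_nonneg (hherm x k) fun v => ?_
          rw [Complex.le_def]
          exact ⟨by simpa only [Complex.zero_re] using h k v,
            by rw [Complex.zero_im]; exact (aux_im_zero (hherm x k) v).symm⟩
        exact aux_key (A := fun i => A i ↑x) (B := fun i j => B i j ↑x) (k := k)
          (fun i => hAherm i ↑x x.2) (hpos ↑x x.2) hpsd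
    rw [hUV]
    have : {x : Set.Icc (0 : ℝ) 1 | ∀ (k : Fin n) (v : Fin r → ℂ),
        0 ≤ (star v ⬝ᵥ (∑ i ∈ Finset.univ.erase k, A i ↑x) *ᵥ v).re}
      = ⋂ (k : Fin n) (v : Fin r → ℂ), {x : Set.Icc (0 : ℝ) 1 |
        0 ≤ (star v ⬝ᵥ (∑ i ∈ Finset.univ.erase k, A i ↑x) *ᵥ v).re} := by
      ext x
      simp [Set.mem_iInter]
    rw [this]
    refine isClosed_iInter fun k => isClosed_iInter fun v => ?_
    exact isClosed_le continuous_const (Complex.continuous_re.comp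
      (continuous_const.dotProduct ((hgc k).matrix_mulVec continuous_const)))
  have hUne : U.Nonempty := ⟨⟨0, by norm_num⟩, fun k => h0 k⟩
  have hUuniv : U = Set.univ := IsClopen.eq_univ ⟨hUclosed, hUopen⟩ hUne
  intro t ht k
  have hx : (⟨t, ht⟩ : Set.Icc (0 : ℝ) 1) ∈ U := by
    rw [hUuniv]
    exact Set.mem_univ _
  exact hx k
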